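/- Local Markov implies recursive factorization: suppose for each node x_j of a DAG, K satisfies K(x_j | parents, nondescendants-context) = K(x_j | {pa_j}*) up to a constant (local Markov condition), and K satisfies the chain rule over any topological ordering. Then the joint complexity factorizes: K(x_1,...,x_n) = Σ_j K(x_j | {pa_j}*) up to an additive constant depending on n. -/
import Mathlib


/-- Local Markov implies recursive factorization. With nodes `x_1,...,x_n`
listed in a topological order, the chain rule
`K(x_1,...,x_n) = Σ_j K(x_j | (x_1,...,x_{j-1})*)` up to an additive constant, together
with the local Markov condition `K(x_j | nondescendant-context) = K(x_j | {pa_j}*)`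
up to an additive constant, give the factorization
`K(x_1,...,x_n) = Σ_j K(x_j | {pa_j}*)` up to an additive constant depending on `n`. -/
theorem local_markov_implies_recursive_factorization
    (S : Type) (n : ℕ) (x : Fin n → S)
    (KJL : List S → ℤ)            -- joint complexity of a tuple of strings
    (Kc : S → List S → ℤ)         -- K(s | (tuple)*), given optimal compression of tuple
    (pa : Fin n → List S)         -- concatenated parents of each node
    (c₁ c₂ : ℤ)
    -- chain rule over the topological ordering
    (hchain : |KJL (List.ofFn x) - ∑ j : Fin n, Kc (x j) ((List.ofFn x).take j)| ≤ c₁)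
    -- local Markov condition: given the parents' optimal compression, conditioning on
    -- the preceding nondescendants does not change the complexity
    (hlocal : ∀ j : Fin n,
      |Kc (x j) ((List.ofFn x).take j) - Kc (x j) (pa j)| ≤ c₂) :
    |KJL (List.ofFn x) - ∑ j : Fin n, Kc (x j) (pa j)| ≤ c₁ + n * c₂ := by
  have h : KJL (List.ofFn x) - ∑ j : Fin n, Kc (x j) (pa j)
      = (KJL (List.ofFn x) - ∑ j : Fin n, Kc (x j) ((List.ofFn x).take j))
        + ∑ j : Fin n, (Kc (x j) ((List.ofFn x).take j) - Kc (x j) (pa j)) := by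
    rw [Finset.sum_sub_distrib]; ring
  rw [h]
  calc |_| ≤ |KJL (List.ofFn x) - ∑ j : Fin n, Kc (x j) ((List.ofFn x).take j)|
      + |∑ j : Fin n, (Kc (x j) ((List.ofFn x).take j) - Kc (x j) (pa j))| := abs_add_le _ _
    _ ≤ c₁ + ∑ j : Fin n, |Kc (x j) ((List.ofFn x).take j) - Kc (x j) (pa j)| :=
        add_le_add hchain (Finset.abs_sum_le_sum_abs _ _)
    _ ≤ c₁ + ∑ _j : Fin n, c₂ := by
        gcongr with j; exact hlocal j
    _ = c₁ + n * c₂ := by simp [mul_comm]
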